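/- Let a ≠ 0 be a real number, s ≠ 0, δ > 0 with δ|s| < π/2, and k_j = k₀ + jδ. Suppose f_j = a·sin(2k_j s) + ε_j where ε_j → 0 as j → ∞. Then f_j does not converge to 0. -/

import Mathlib

open Filter

/-- If `a ≠ 0`, `s ≠ 0`, `δ > 0` with `δ|s| < π/2`, `k_j = k₀ + jδ`, and
`f_j = a·sin(2 k_j s) + ε_j` with `ε_j → 0`, then `f_j` does not converge to `0`. -/
theorem perturbed_sin_arith_progression_not_tendsto_zero
    (k₀ δ s a : ℝ) (ha : a ≠ 0) (hδ : 0 < δ) (hs : s ≠ 0)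
    (h : δ * |s| < Real.pi / 2)
    (ε f : ℕ → ℝ) (hε : Tendsto ε atTop (nhds 0))
    (hf : ∀ j, f j = a * Real.sin (2 * (k₀ + j * δ) * s) + ε j) :
    ¬ Tendsto f atTop (nhds 0) := by
  intro hF
  set x : ℕ → ℝ := fun j => 2 * (k₀ + j * δ) * s with hx
  set Δ : ℝ := 2 * δ * s with hΔ
  have hxstep : ∀ j, x (j + 1) = x j + Δ := by
    intro j; simp only [hx, hΔ]; push_cast; ring
  have hsΔ : Real.sin Δ ≠ 0 := by
    have habs : |Δ| = 2 * δ * |s| := by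
      rw [hΔ, abs_mul, abs_of_pos (by linarith : (0:ℝ) < 2 * δ)]
    have h0 : 0 < |Δ| := by
      rw [habs]; positivity
    have h1 : |Δ| < Real.pi := by rw [habs]; linarith
    have := Real.sin_pos_of_pos_of_lt_pi h0 h1
    rcases abs_cases Δ with ⟨he, _⟩ | ⟨he, _⟩
    · rw [he] at this; exact ne_of_gt this
    · rw [he, Real.sin_neg] at this; intro hc; rw [hc] at this; simp at this
  -- sin x j → 0
  have hg : Tendsto (fun j => Real.sin (x j)) atTop (nhds 0) := by
    have : (fun j => Real.sin (x j)) = fun j => (f j - ε j) / a := by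
      funext j; rw [hf j]; field_simp
      simp only [hx]; ring
    rw [this]
    have h2 := (hF.sub hε).div_const a
    norm_num at h2
    exact h2
  have hg1 : Tendsto (fun j => Real.sin (x (j + 1))) atTop (nhds 0) :=
    hg.comp (tendsto_add_atTop_nat 1)
  -- cos x j → 0
  have hc : Tendsto (fun j => Real.cos (x j)) atTop (nhds 0) := by
    have heq : (fun j => Real.cos (x j))
        = fun j => (Real.sin (x (j + 1)) - Real.sin (x j) * Real.cos Δ) / Real.sin Δ := by
      funext j
      rw [hxstep j, Real.sin_add]
      field_simp
      ring
    rw [heq]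
    have h2 := (hg1.sub (hg.mul_const (Real.cos Δ))).div_const (Real.sin Δ)
    norm_num at h2
    exact h2
  have hsum : Tendsto (fun j => Real.sin (x j) ^ 2 + Real.cos (x j) ^ 2) atTop (nhds 0) := by
    have := ((hg.mul hg).add (hc.mul hc))
    simpa [sq] using this
  have hone : Tendsto (fun j => Real.sin (x j) ^ 2 + Real.cos (x j) ^ 2) atTop (nhds 1) := by
    simp [Real.sin_sq_add_cos_sq]
  have : (0 : ℝ) = 1 := tendsto_nhds_unique hsum hone
  norm_num at this
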